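/- There exists a group homomorphism χ : H → ℂˣ uniquely determined by the following values on generators: (1) on the class of a permutation matrix permuting the variables X₀,X₁,X₂ among themselves and X₃,X₄,X₅ among themselves, χ is the sign of the permutation; (2) on the class of the block-swap permutation X₀↔X₃, X₁↔X₄, X₂↔X₅, χ equals −1; (3) on the class of a diagonal matrix diag(ζ₀,…,ζ₅) with each ζᵢ a cube root of unity and ζ₀ζ₁ζ₂ = ζ₃ζ₄ζ₅, χ equals ζ₀ζ₁ζ₂. Moreover, the kernel of χ is a subgroup of H of index 6 and of order 972. -/

import Mathlib

open Matrix

/-- The subgroup of nonzero scalar matrices inside `GL₆(ℂ)`. -/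
def scalarSubgroup : Subgroup (GL (Fin 6) ℂ) :=
  (Units.map (Matrix.scalar (Fin 6) : ℂ →+* Matrix (Fin 6) (Fin 6) ℂ).toMonoidHom).range

instance scalarSubgroup_normal : scalarSubgroup.Normal := by
  constructor
  rintro x ⟨c, rfl⟩ g
  refine ⟨c, ?_⟩
  apply Units.ext
  have h : (Matrix.scalar (Fin 6)) (c : ℂ) * (↑g⁻¹ : Matrix (Fin 6) (Fin 6) ℂ) =
      (↑g⁻¹ : Matrix (Fin 6) (Fin 6) ℂ) * (Matrix.scalar (Fin 6)) (c : ℂ) :=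
    Matrix.scalar_commute _ (fun r => Commute.all _ r) _
  show (Matrix.scalar (Fin 6)) (c : ℂ) =
    ((↑g : Matrix (Fin 6) (Fin 6) ℂ) * (Matrix.scalar (Fin 6)) (c : ℂ)) *
      (↑g⁻¹ : Matrix (Fin 6) (Fin 6) ℂ)
  rw [mul_assoc, h, ← mul_assoc, Units.mul_inv, one_mul]

/-- `PGL₆(ℂ)`: the quotient of `GL₆(ℂ)` by its subgroup of nonzero scalar matrices. -/
abbrev PGL6 := GL (Fin 6) ℂ ⧸ scalarSubgroup

/-- A permutation `σ` of `{0,…,5}` preserves the partition `{{0,1,2},{3,4,5}}` if it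
permutes each block within itself or swaps the two blocks. -/
def PreservesPartition (σ : Equiv.Perm (Fin 6)) : Prop :=
  (∀ i : Fin 6, ((σ i : ℕ) < 3 ↔ (i : ℕ) < 3)) ∨
    (∀ i : Fin 6, ((σ i : ℕ) < 3 ↔ ¬ (i : ℕ) < 3))

/-- The classes in `PGL₆(ℂ)` of permutation matrices of partition-preserving
permutations. -/
def permGens : Set PGL6 :=
  {x | ∃ (A : GL (Fin 6) ℂ) (σ : Equiv.Perm (Fin 6)), PreservesPartition σ ∧
    (A : Matrix (Fin 6) (Fin 6) ℂ) = σ.permMatrix ℂ ∧ x = QuotientGroup.mk A}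

/-- The classes in `PGL₆(ℂ)` of diagonal matrices `diag(ζ₀,…,ζ₅)` with all `ζᵢ` cube
roots of unity and `ζ₀ζ₁ζ₂ = ζ₃ζ₄ζ₅`. -/
def diagGens : Set PGL6 :=
  {x | ∃ (A : GL (Fin 6) ℂ) (ζ : Fin 6 → ℂ), (∀ i, ζ i ^ 3 = 1) ∧
    ζ 0 * ζ 1 * ζ 2 = ζ 3 * ζ 4 * ζ 5 ∧
    (A : Matrix (Fin 6) (Fin 6) ℂ) = Matrix.diagonal ζ ∧ x = QuotientGroup.mk A}

/-- The subgroup `H ⊂ PGL₆(ℂ)` generated by the partition-preserving permutation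
matrices and the admissible diagonal matrices. -/
def Hgroup : Subgroup PGL6 := Subgroup.closure (permGens ∪ diagGens)


/-- The block-swap permutation `0↔3, 1↔4, 2↔5` of `{0,…,5}`. -/
def blockSwap : Equiv.Perm (Fin 6) :=
  Equiv.swap 0 3 * Equiv.swap 1 4 * Equiv.swap 2 5

/-- The prescribed values of the character `χ` on the generators of `H`:
(1) on a permutation matrix permuting `X₀,X₁,X₂` among themselves and `X₃,X₄,X₅` among
themselves it is the sign of the permutation; (2) on the block swap
`X₀↔X₃, X₁↔X₄, X₂↔X₅` it is `−1`; (3) on a diagonal matrix `diag(ζ₀,…,ζ₅)` with the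
`ζᵢ` cube roots of unity and `ζ₀ζ₁ζ₂ = ζ₃ζ₄ζ₅` it is `ζ₀ζ₁ζ₂`. -/
def ChiCond (χ : Hgroup →* ℂˣ) : Prop :=
  (∀ (A : GL (Fin 6) ℂ) (σ : Equiv.Perm (Fin 6)),
      (∀ i : Fin 6, ((σ i : ℕ) < 3 ↔ (i : ℕ) < 3)) →
      (A : Matrix (Fin 6) (Fin 6) ℂ) = σ.permMatrix ℂ →
      ∀ hA : (QuotientGroup.mk A : PGL6) ∈ Hgroup,
        (χ ⟨QuotientGroup.mk A, hA⟩ : ℂ) = ((Equiv.Perm.sign σ : ℤ) : ℂ)) ∧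
  (∀ A : GL (Fin 6) ℂ,
      (A : Matrix (Fin 6) (Fin 6) ℂ) = blockSwap.permMatrix ℂ →
      ∀ hA : (QuotientGroup.mk A : PGL6) ∈ Hgroup,
        (χ ⟨QuotientGroup.mk A, hA⟩ : ℂ) = -1) ∧
  (∀ (A : GL (Fin 6) ℂ) (ζ : Fin 6 → ℂ), (∀ i, ζ i ^ 3 = 1) →
      ζ 0 * ζ 1 * ζ 2 = ζ 3 * ζ 4 * ζ 5 →
      (A : Matrix (Fin 6) (Fin 6) ℂ) = Matrix.diagonal ζ →
      ∀ hA : (QuotientGroup.mk A : PGL6) ∈ Hgroup,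
        (χ ⟨QuotientGroup.mk A, hA⟩ : ℂ) = ζ 0 * ζ 1 * ζ 2)


section Aux

-- monomial matrix
def monMat (σ : Equiv.Perm (Fin 6)) (ζ : Fin 6 → ℂ) : Matrix (Fin 6) (Fin 6) ℂ :=
  Matrix.of fun i j => if σ i = j then ζ j else 0

lemma monMat_mul (σ τ : Equiv.Perm (Fin 6)) (ζ η : Fin 6 → ℂ) :
    monMat σ ζ * monMat τ η = monMat (τ * σ) (fun j => ζ (τ⁻¹ j) * η j) := by
  ext i j
  simp only [monMat, Matrix.mul_apply, Matrix.of_apply]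
  rw [Finset.sum_eq_single (σ i)]
  · rw [if_pos rfl, Equiv.Perm.mul_apply]
    by_cases h : τ (σ i) = j
    · rw [if_pos h, if_pos h, ← h, Equiv.Perm.coe_inv, Equiv.symm_apply_apply]
    · rw [if_neg h, if_neg h, mul_zero]
  · intro k _ hk; simp [Ne.symm hk]
  · intro h; simp at h

lemma monMat_one : monMat 1 1 = (1 : Matrix (Fin 6) (Fin 6) ℂ) := by
  ext i j
  simp [monMat, Matrix.one_apply, eq_comm]
  split_ifs <;> simp_all

lemma permMatrix_eq_monMat (σ : Equiv.Perm (Fin 6)) : σ.permMatrix ℂ = monMat σ 1 := by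
  ext i j
  simp [monMat, Equiv.Perm.permMatrix, PEquiv.toMatrix, Equiv.toPEquiv_apply, eq_comm]

lemma diagonal_eq_monMat (ζ : Fin 6 → ℂ) : Matrix.diagonal ζ = monMat 1 ζ := by
  ext i j
  by_cases h : i = j <;> simp [monMat, Matrix.diagonal_apply, h]

lemma monMat_smul (σ : Equiv.Perm (Fin 6)) (ζ : Fin 6 → ℂ) (c : ℂ) :
    c • monMat σ ζ = monMat σ (fun j => c * ζ j) := by
  ext i j
  simp only [monMat, Matrix.smul_apply, Matrix.of_apply, smul_eq_mul]
  split <;> simp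

lemma pp_one : PreservesPartition 1 := Or.inl fun _ => Iff.rfl

lemma pp_mul {σ τ : Equiv.Perm (Fin 6)} (hσ : PreservesPartition σ)
    (hτ : PreservesPartition τ) : PreservesPartition (σ * τ) := by
  rcases hσ with h1 | h1 <;> rcases hτ with h2 | h2
  · exact Or.inl fun i => (h1 (τ i)).trans (h2 i)
  · exact Or.inr fun i => (h1 (τ i)).trans (h2 i)
  · exact Or.inr fun i => (h1 (τ i)).trans (not_congr (h2 i))
  · exact Or.inl fun i => ((h1 (τ i)).trans (not_congr (h2 i))).trans not_not

lemma pp_inv {σ : Equiv.Perm (Fin 6)} (hσ : PreservesPartition σ) :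
    PreservesPartition σ⁻¹ := by
  rcases hσ with h | h
  · refine Or.inl fun i => ?_
    have := h (σ⁻¹ i); rw [Equiv.Perm.coe_inv, Equiv.apply_symm_apply] at this
    exact this.symm
  · refine Or.inr fun i => ?_
    have := h (σ⁻¹ i); rw [Equiv.Perm.coe_inv, Equiv.apply_symm_apply] at this
    tauto

lemma triple_lt (ζ : Fin 6 → ℂ) (a b c : Fin 6) (ha : (a : ℕ) < 3) (hb : (b : ℕ) < 3)
    (hc : (c : ℕ) < 3) (hab : a ≠ b) (hac : a ≠ c) (hbc : b ≠ c) :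
    ζ a * ζ b * ζ c = ζ 0 * ζ 1 * ζ 2 := by
  fin_cases a <;> fin_cases b <;> fin_cases c <;>
    first
      | exact absurd rfl hab
      | exact absurd rfl hac
      | exact absurd rfl hbc
      | exact absurd ha (by decide)
      | exact absurd hb (by decide)
      | exact absurd hc (by decide)
      | (show ζ 0 * ζ 1 * ζ 2 = ζ 0 * ζ 1 * ζ 2; ring)
      | (show ζ 0 * ζ 2 * ζ 1 = ζ 0 * ζ 1 * ζ 2; ring)
      | (show ζ 1 * ζ 0 * ζ 2 = ζ 0 * ζ 1 * ζ 2; ring)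
      | (show ζ 1 * ζ 2 * ζ 0 = ζ 0 * ζ 1 * ζ 2; ring)
      | (show ζ 2 * ζ 0 * ζ 1 = ζ 0 * ζ 1 * ζ 2; ring)
      | (show ζ 2 * ζ 1 * ζ 0 = ζ 0 * ζ 1 * ζ 2; ring)

lemma triple_ge (ζ : Fin 6 → ℂ) (a b c : Fin 6) (ha : ¬ (a : ℕ) < 3) (hb : ¬ (b : ℕ) < 3)
    (hc : ¬ (c : ℕ) < 3) (hab : a ≠ b) (hac : a ≠ c) (hbc : b ≠ c) :
    ζ a * ζ b * ζ c = ζ 3 * ζ 4 * ζ 5 := by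
  fin_cases a <;> fin_cases b <;> fin_cases c <;>
    first
      | exact absurd rfl hab
      | exact absurd rfl hac
      | exact absurd rfl hbc
      | exact absurd (by decide : ((0:Fin 6):ℕ) < 3) ha
      | exact absurd (by decide : ((1:Fin 6):ℕ) < 3) ha
      | exact absurd (by decide : ((2:Fin 6):ℕ) < 3) ha
      | exact absurd (by decide : ((0:Fin 6):ℕ) < 3) hb
      | exact absurd (by decide : ((1:Fin 6):ℕ) < 3) hb
      | exact absurd (by decide : ((2:Fin 6):ℕ) < 3) hb
      | exact absurd (by decide : ((0:Fin 6):ℕ) < 3) hc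
      | exact absurd (by decide : ((1:Fin 6):ℕ) < 3) hc
      | exact absurd (by decide : ((2:Fin 6):ℕ) < 3) hc
      | (show ζ 3 * ζ 4 * ζ 5 = ζ 3 * ζ 4 * ζ 5; ring)
      | (show ζ 3 * ζ 5 * ζ 4 = ζ 3 * ζ 4 * ζ 5; ring)
      | (show ζ 4 * ζ 3 * ζ 5 = ζ 3 * ζ 4 * ζ 5; ring)
      | (show ζ 4 * ζ 5 * ζ 3 = ζ 3 * ζ 4 * ζ 5; ring)
      | (show ζ 5 * ζ 3 * ζ 4 = ζ 3 * ζ 4 * ζ 5; ring)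
      | (show ζ 5 * ζ 4 * ζ 3 = ζ 3 * ζ 4 * ζ 5; ring)

lemma triple_block {σ : Equiv.Perm (Fin 6)} (hσ : PreservesPartition σ) (ζ : Fin 6 → ℂ)
    (hζ : ζ 0 * ζ 1 * ζ 2 = ζ 3 * ζ 4 * ζ 5) :
    ζ (σ 0) * ζ (σ 1) * ζ (σ 2) = ζ 0 * ζ 1 * ζ 2 ∧
      ζ (σ 3) * ζ (σ 4) * ζ (σ 5) = ζ 0 * ζ 1 * ζ 2 := by
  have d01 : σ 0 ≠ σ 1 := fun h => by simpa using σ.injective h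
  have d02 : σ 0 ≠ σ 2 := fun h => by simpa using σ.injective h
  have d12 : σ 1 ≠ σ 2 := fun h => by simpa using σ.injective h
  have d34 : σ 3 ≠ σ 4 := fun h => by simpa using σ.injective h
  have d35 : σ 3 ≠ σ 5 := fun h => by simpa using σ.injective h
  have d45 : σ 4 ≠ σ 5 := fun h => by simpa using σ.injective h
  rcases hσ with h | h
  · constructor
    · exact triple_lt ζ _ _ _ ((h 0).mpr (by decide)) ((h 1).mpr (by decide))
        ((h 2).mpr (by decide)) d01 d02 d12
    · rw [triple_ge ζ _ _ _ (fun hx => absurd ((h 3).mp hx) (by decide))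
        (fun hx => absurd ((h 4).mp hx) (by decide))
        (fun hx => absurd ((h 5).mp hx) (by decide)) d34 d35 d45]
      exact hζ.symm
  · constructor
    · rw [triple_ge ζ _ _ _ (fun hx => absurd ((h 0).mp hx) (by decide))
        (fun hx => absurd ((h 1).mp hx) (by decide))
        (fun hx => absurd ((h 2).mp hx) (by decide)) d01 d02 d12]
      exact hζ.symm
    · exact triple_lt ζ _ _ _ ((h 3).mpr (by decide)) ((h 4).mpr (by decide))
        ((h 5).mpr (by decide)) d34 d35 d45


lemma zeta_ne_zero {z : ℂ} (h : z ^ 3 = 1) : z ≠ 0 := by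
  intro h0; rw [h0] at h; norm_num at h

/-- an invertible monomial matrix as an element of `GL₆(ℂ)` -/
noncomputable def monGL (σ : Equiv.Perm (Fin 6)) (ζ : Fin 6 → ℂ) (hζ : ∀ i, ζ i ^ 3 = 1) :
    GL (Fin 6) ℂ where
  val := monMat σ ζ
  inv := monMat σ⁻¹ (fun j => ζ (σ j) ^ 2)
  val_inv := by
    rw [monMat_mul]
    have h1 : (fun j => ζ ((σ⁻¹)⁻¹ j) * (fun j => ζ (σ j) ^ 2) j) = (1 : Fin 6 → ℂ) := by
      funext j
      simp only [inv_inv, Pi.one_apply]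
      rw [← pow_succ']
      exact hζ (σ j)
    rw [h1, inv_mul_cancel, monMat_one]
  inv_val := by
    rw [monMat_mul]
    have h1 : (fun j => (fun j => ζ (σ j) ^ 2) (σ⁻¹ j) * ζ j) = (1 : Fin 6 → ℂ) := by
      funext j
      simp only [Equiv.Perm.coe_inv, Equiv.apply_symm_apply, Pi.one_apply]
      rw [← pow_succ]
      exact hζ j
    rw [h1, mul_inv_cancel, monMat_one]

lemma monGL_coe (σ : Equiv.Perm (Fin 6)) (ζ : Fin 6 → ℂ) (hζ : ∀ i, ζ i ^ 3 = 1) :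
    (monGL σ ζ hζ : Matrix (Fin 6) (Fin 6) ℂ) = monMat σ ζ := rfl

/-- the data of a monomial form for an element of `GL₆(ℂ)` -/
def IsMon (A : GL (Fin 6) ℂ) (σ : Equiv.Perm (Fin 6)) (ζ : Fin 6 → ℂ) : Prop :=
  PreservesPartition σ ∧ (∀ i, ζ i ^ 3 = 1) ∧ (ζ 0 * ζ 1 * ζ 2 = ζ 3 * ζ 4 * ζ 5) ∧
    (A : Matrix (Fin 6) (Fin 6) ℂ) = monMat σ ζ

lemma isMon_mul {A B : GL (Fin 6) ℂ} {σ τ : Equiv.Perm (Fin 6)} {ζ η : Fin 6 → ℂ}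
    (hA : IsMon A σ ζ) (hB : IsMon B τ η) :
    IsMon (A * B) (τ * σ) (fun j => ζ (τ⁻¹ j) * η j) := by
  obtain ⟨pσ, cζ, sζ, mA⟩ := hA
  obtain ⟨pτ, cη, sη, mB⟩ := hB
  have tb := triple_block (pp_inv pτ) ζ sζ
  refine ⟨pp_mul pτ pσ, fun i => by rw [mul_pow, cζ, cη, one_mul], ?_, ?_⟩
  · have e1 : ζ (τ⁻¹ 0) * η 0 * (ζ (τ⁻¹ 1) * η 1) * (ζ (τ⁻¹ 2) * η 2)
        = ζ (τ⁻¹ 0) * ζ (τ⁻¹ 1) * ζ (τ⁻¹ 2) * (η 0 * η 1 * η 2) := by ring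
    have e2 : ζ (τ⁻¹ 3) * η 3 * (ζ (τ⁻¹ 4) * η 4) * (ζ (τ⁻¹ 5) * η 5)
        = ζ (τ⁻¹ 3) * ζ (τ⁻¹ 4) * ζ (τ⁻¹ 5) * (η 3 * η 4 * η 5) := by ring
    simp only []
    rw [e1, e2, tb.1, tb.2, sη]
  · rw [Units.val_mul, mA, mB, monMat_mul]

lemma isMon_inv {A : GL (Fin 6) ℂ} {σ : Equiv.Perm (Fin 6)} {ζ : Fin 6 → ℂ}
    (hA : IsMon A σ ζ) : IsMon A⁻¹ σ⁻¹ (fun j => ζ (σ j) ^ 2) := by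
  obtain ⟨pσ, cζ, sζ, mA⟩ := hA
  have tb := triple_block pσ ζ sζ
  have hAeq : A = monGL σ ζ cζ := Units.ext mA
  refine ⟨pp_inv pσ, fun i => by rw [← pow_mul, mul_comm, pow_mul, cζ, one_pow], ?_, ?_⟩
  · have e1 : ζ (σ 0) ^ 2 * ζ (σ 1) ^ 2 * ζ (σ 2) ^ 2
        = (ζ (σ 0) * ζ (σ 1) * ζ (σ 2)) ^ 2 := by ring
    have e2 : ζ (σ 3) ^ 2 * ζ (σ 4) ^ 2 * ζ (σ 5) ^ 2
        = (ζ (σ 3) * ζ (σ 4) * ζ (σ 5)) ^ 2 := by ring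
    simp only []
    rw [e1, e2, tb.1, tb.2]
  · rw [hAeq]
    rfl

lemma isMon_one : IsMon (1 : GL (Fin 6) ℂ) 1 1 :=
  ⟨pp_one, fun _ => one_pow 3, by norm_num, by rw [monMat_one]; rfl⟩

/-- well-definedness: two monomial forms of the same `PGL₆` class have the same
permutation, and proportional diagonal parts with a cube root of unity ratio -/
lemma mon_wd {A B : GL (Fin 6) ℂ} {σ τ : Equiv.Perm (Fin 6)} {ζ η : Fin 6 → ℂ}
    (hA : IsMon A σ ζ) (hB : IsMon B τ η)
    (h : (QuotientGroup.mk A : PGL6) = QuotientGroup.mk B) :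
    σ = τ ∧ ∃ c : ℂ, c ^ 3 = 1 ∧ ∀ i, η i = c * ζ i := by
  obtain ⟨pσ, cζ, sζ, mA⟩ := hA
  obtain ⟨pτ, cη, sη, mB⟩ := hB
  obtain ⟨c, hc⟩ := QuotientGroup.eq.mp h
  have hBA : B = A * (Units.map (Matrix.scalar (Fin 6) :
      ℂ →+* Matrix (Fin 6) (Fin 6) ℂ).toMonoidHom c) := by
    rw [hc, mul_inv_cancel_left]
  have hBv : (B : Matrix (Fin 6) (Fin 6) ℂ) = monMat σ (fun j => (c : ℂ) * ζ j) := by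
    rw [hBA, Units.val_mul, mA]
    have hsc : ((Units.map (Matrix.scalar (Fin 6) :
        ℂ →+* Matrix (Fin 6) (Fin 6) ℂ).toMonoidHom c : GL (Fin 6) ℂ) :
          Matrix (Fin 6) (Fin 6) ℂ) = (c : ℂ) • (1 : Matrix (Fin 6) (Fin 6) ℂ) := by
      ext i j
      by_cases hij : i = j <;>
        simp [Matrix.scalar_apply, Matrix.one_apply, Matrix.diagonal_apply, hij]
    rw [hsc, mul_smul_comm, mul_one, monMat_smul]
  have hmm : monMat τ η = monMat σ (fun j => (c : ℂ) * ζ j) := by rw [← mB, hBv]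
  have hcz : ∀ j, (c : ℂ) * ζ j ≠ 0 :=
    fun j => mul_ne_zero (Units.ne_zero c) (zeta_ne_zero (cζ j))
  have hτσ : τ = σ := by
    apply Equiv.ext
    intro i
    by_contra hne
    have hij := congrFun (congrFun hmm i) (σ i)
    have e1 : (monMat τ η) i (σ i) = 0 := by simp [monMat, hne]
    have e2 : (monMat σ fun j => (c : ℂ) * ζ j) i (σ i) = (c : ℂ) * ζ (σ i) := by
      simp [monMat]
    rw [e1, e2] at hij
    exact hcz (σ i) hij.symm
  subst hτσ
  have hη : ∀ j, η j = (c : ℂ) * ζ j := by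
    intro j
    have hij := congrFun (congrFun hmm (τ⁻¹ j)) j
    have e1 : (monMat τ η) (τ⁻¹ j) j = η j := by simp [monMat]
    have e2 : (monMat τ fun j => (c : ℂ) * ζ j) (τ⁻¹ j) j = (c : ℂ) * ζ j := by
      simp [monMat]
    rw [e1, e2] at hij
    exact hij
  refine ⟨rfl, (c : ℂ), ?_, hη⟩
  have h0 := cη 0
  rw [hη 0, mul_pow, cζ 0, mul_one] at h0
  exact h0

lemma monform_of_mem {x : PGL6} (hx : x ∈ Hgroup) :
    ∃ (A : GL (Fin 6) ℂ) (σ : Equiv.Perm (Fin 6)) (ζ : Fin 6 → ℂ),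
      IsMon A σ ζ ∧ x = QuotientGroup.mk A := by
  induction hx using Subgroup.closure_induction with
  | mem y hy =>
    rcases hy with ⟨A, σ, hpp, hmat, rfl⟩ | ⟨A, ζ, hcube, hsum, hmat, rfl⟩
    · exact ⟨A, σ, 1, ⟨hpp, fun _ => one_pow 3, by norm_num,
        by rw [hmat, permMatrix_eq_monMat]⟩, rfl⟩
    · exact ⟨A, 1, ζ, ⟨pp_one, hcube, hsum, by rw [hmat, diagonal_eq_monMat]⟩, rfl⟩
  | one => exact ⟨1, 1, 1, isMon_one, rfl⟩
  | mul y z hy hz ihy ihz =>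
    obtain ⟨A, σ, ζ, hA, rfl⟩ := ihy
    obtain ⟨B, τ, η, hB, rfl⟩ := ihz
    exact ⟨A * B, _, _, isMon_mul hA hB, rfl⟩
  | inv y hy ihy =>
    obtain ⟨A, σ, ζ, hA, rfl⟩ := ihy
    exact ⟨A⁻¹, _, _, isMon_inv hA, rfl⟩

lemma mk_mem_Hgroup {A : GL (Fin 6) ℂ} {σ : Equiv.Perm (Fin 6)} {ζ : Fin 6 → ℂ}
    (h : IsMon A σ ζ) : (QuotientGroup.mk A : PGL6) ∈ Hgroup := by
  obtain ⟨pσ, cζ, sζ, mA⟩ := h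
  have hone : ∀ i, (1 : Fin 6 → ℂ) i ^ 3 = 1 := fun _ => one_pow 3
  have hsplit : A = monGL σ 1 hone * monGL 1 ζ cζ := by
    apply Units.ext
    rw [Units.val_mul, monGL_coe, monGL_coe, monMat_mul, mA, one_mul]
    congr 1
    funext j
    simp
  rw [hsplit, QuotientGroup.mk_mul]
  refine Subgroup.mul_mem _ ?_ ?_
  · exact Subgroup.subset_closure (Or.inl ⟨monGL σ 1 hone, σ, pσ,
      by rw [monGL_coe, permMatrix_eq_monMat], rfl⟩)
  · exact Subgroup.subset_closure (Or.inr ⟨monGL 1 ζ cζ, ζ, cζ, sζ,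
      by rw [monGL_coe, diagonal_eq_monMat], rfl⟩)

open Classical in
/-- the underlying value of the character -/
noncomputable def chiFun (x : PGL6) : ℂ :=
  if h : ∃ (A : GL (Fin 6) ℂ) (σ : Equiv.Perm (Fin 6)) (ζ : Fin 6 → ℂ),
      IsMon A σ ζ ∧ x = QuotientGroup.mk A then
    ((Equiv.Perm.sign h.choose_spec.choose : ℤ) : ℂ) *
      (h.choose_spec.choose_spec.choose 0 * h.choose_spec.choose_spec.choose 1 *
        h.choose_spec.choose_spec.choose 2)
  else 1

lemma chiFun_spec {A : GL (Fin 6) ℂ} {σ : Equiv.Perm (Fin 6)} {ζ : Fin 6 → ℂ}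
    (h : IsMon A σ ζ) :
    chiFun (QuotientGroup.mk A) = ((Equiv.Perm.sign σ : ℤ) : ℂ) * (ζ 0 * ζ 1 * ζ 2) := by
  have hex : ∃ (A' : GL (Fin 6) ℂ) (σ' : Equiv.Perm (Fin 6)) (ζ' : Fin 6 → ℂ),
      IsMon A' σ' ζ' ∧ (QuotientGroup.mk A : PGL6) = QuotientGroup.mk A' :=
    ⟨A, σ, ζ, h, rfl⟩
  rw [chiFun, dif_pos hex]
  obtain ⟨h', hq⟩ := hex.choose_spec.choose_spec.choose_spec
  set σ' := hex.choose_spec.choose with hσ'def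
  set ζ' := hex.choose_spec.choose_spec.choose with hζ'def
  clear_value σ' ζ'
  obtain ⟨hστ, c, hc3, hcη⟩ := mon_wd h h' hq
  rw [← hστ]
  congr 1
  rw [hcη 0, hcη 1, hcη 2,
    show (c * ζ 0 * (c * ζ 1) * (c * ζ 2)) = c ^ 3 * (ζ 0 * ζ 1 * ζ 2) from by ring,
    hc3, one_mul]

lemma chiFun_ne_zero {x : PGL6} (hx : x ∈ Hgroup) : chiFun x ≠ 0 := by
  obtain ⟨A, σ, ζ, hA, rfl⟩ := monform_of_mem hx
  rw [chiFun_spec hA]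
  exact mul_ne_zero (Int.cast_ne_zero.mpr (Units.ne_zero _))
    (mul_ne_zero (mul_ne_zero (zeta_ne_zero (hA.2.1 0)) (zeta_ne_zero (hA.2.1 1)))
      (zeta_ne_zero (hA.2.1 2)))

lemma chiFun_mul {x y : PGL6} (hx : x ∈ Hgroup) (hy : y ∈ Hgroup) :
    chiFun (x * y) = chiFun x * chiFun y := by
  obtain ⟨A, σ, ζ, hA, rfl⟩ := monform_of_mem hx
  obtain ⟨B, τ, η, hB, rfl⟩ := monform_of_mem hy
  rw [← QuotientGroup.mk_mul, chiFun_spec hA, chiFun_spec hB, chiFun_spec (isMon_mul hA hB)]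
  have tb := triple_block (pp_inv hB.1) ζ hA.2.2.1
  show ((Equiv.Perm.sign (τ * σ) : ℤ) : ℂ) * (ζ (τ⁻¹ 0) * η 0 * (ζ (τ⁻¹ 1) * η 1) *
      (ζ (τ⁻¹ 2) * η 2)) = _
  rw [show (ζ (τ⁻¹ 0) * η 0 * (ζ (τ⁻¹ 1) * η 1) * (ζ (τ⁻¹ 2) * η 2)) =
    ζ (τ⁻¹ 0) * ζ (τ⁻¹ 1) * ζ (τ⁻¹ 2) * (η 0 * η 1 * η 2) from by ring, tb.1, _root_.map_mul]
  push_cast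
  ring

/-- The character `χ` on `H`. -/
noncomputable def chiU : Hgroup →* ℂˣ :=
  MonoidHom.mk' (fun x => Units.mk0 (chiFun x.1) (chiFun_ne_zero x.2))
    (fun a b => by
      apply Units.ext
      simp only [Units.val_mk0, Units.val_mul]
      exact chiFun_mul a.2 b.2)

lemma chiU_spec {A : GL (Fin 6) ℂ} {σ : Equiv.Perm (Fin 6)} {ζ : Fin 6 → ℂ}
    (h : IsMon A σ ζ) (hA : (QuotientGroup.mk A : PGL6) ∈ Hgroup) :
    (chiU ⟨QuotientGroup.mk A, hA⟩ : ℂ) =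
      ((Equiv.Perm.sign σ : ℤ) : ℂ) * (ζ 0 * ζ 1 * ζ 2) := chiFun_spec h

lemma bs_pp2 : ∀ i : Fin 6, ((blockSwap i : ℕ) < 3 ↔ ¬ (i : ℕ) < 3) := by decide

lemma bs_sq : blockSwap * blockSwap = 1 := by decide

lemma sign_blockSwap : Equiv.Perm.sign blockSwap = -1 := by
  rw [blockSwap, _root_.map_mul, _root_.map_mul, Equiv.Perm.sign_swap (by decide),
    Equiv.Perm.sign_swap (by decide), Equiv.Perm.sign_swap (by decide)]
  decide

lemma one_cube : ∀ i : Fin 6, (1 : Fin 6 → ℂ) i ^ 3 = 1 := fun _ => one_pow 3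

lemma chiCond_perm {χ' : Hgroup →* ℂˣ} (hχ : ChiCond χ') {A : GL (Fin 6) ℂ}
    {σ : Equiv.Perm (Fin 6)} (hpp : PreservesPartition σ)
    (hmat : (A : Matrix (Fin 6) (Fin 6) ℂ) = monMat σ 1)
    (hA : (QuotientGroup.mk A : PGL6) ∈ Hgroup) :
    (χ' ⟨QuotientGroup.mk A, hA⟩ : ℂ) = ((Equiv.Perm.sign σ : ℤ) : ℂ) := by
  rcases hpp with h1 | h2
  · exact hχ.1 A σ h1 (by rw [hmat, permMatrix_eq_monMat]) hA
  · set τ := σ * blockSwap with hτdef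
    have hτ1 : ∀ i : Fin 6, ((τ i : ℕ) < 3 ↔ (i : ℕ) < 3) := by
      intro i
      have ha := h2 (blockSwap i)
      have hb := bs_pp2 i
      rw [hτdef]
      simp only [Equiv.Perm.mul_apply]
      tauto
    have hστ : σ = τ * blockSwap := by
      rw [hτdef, mul_assoc, bs_sq, mul_one]
    set B := monGL blockSwap 1 one_cube with hBdef
    set C := monGL τ 1 one_cube with hCdef
    have hBmon : IsMon B blockSwap 1 :=
      ⟨Or.inr bs_pp2, one_cube, by norm_num, rfl⟩
    have hCmon : IsMon C τ 1 := ⟨Or.inl hτ1, one_cube, by norm_num, rfl⟩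
    have hB : (QuotientGroup.mk B : PGL6) ∈ Hgroup := mk_mem_Hgroup hBmon
    have hC : (QuotientGroup.mk C : PGL6) ∈ Hgroup := mk_mem_Hgroup hCmon
    have hsplit : A = B * C := by
      apply Units.ext
      rw [Units.val_mul, hBdef, hCdef, monGL_coe, monGL_coe, monMat_mul, hmat, ← hστ]
      exact (congrArg (monMat σ) (funext fun j => by simp)).symm
    have heq : (⟨QuotientGroup.mk A, hA⟩ : Hgroup) = ⟨QuotientGroup.mk B, hB⟩ *
        ⟨QuotientGroup.mk C, hC⟩ := by
      apply Subtype.ext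
      show (QuotientGroup.mk A : PGL6) = QuotientGroup.mk B * QuotientGroup.mk C
      rw [hsplit, QuotientGroup.mk_mul]
    rw [heq, _root_.map_mul, Units.val_mul,
      hχ.2.1 B (by rw [monGL_coe, permMatrix_eq_monMat]) hB,
      hχ.1 C τ hτ1 (by rw [monGL_coe, permMatrix_eq_monMat]) hC]
    have hsign : Equiv.Perm.sign σ = -Equiv.Perm.sign τ := by
      rw [hστ, _root_.map_mul, sign_blockSwap, mul_neg_one]
    rw [hsign]
    push_cast
    ring

lemma chiCond_value {χ' : Hgroup →* ℂˣ} (hχ : ChiCond χ') {A : GL (Fin 6) ℂ}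
    {σ : Equiv.Perm (Fin 6)} {ζ : Fin 6 → ℂ} (h : IsMon A σ ζ)
    (hA : (QuotientGroup.mk A : PGL6) ∈ Hgroup) :
    (χ' ⟨QuotientGroup.mk A, hA⟩ : ℂ) =
      ((Equiv.Perm.sign σ : ℤ) : ℂ) * (ζ 0 * ζ 1 * ζ 2) := by
  obtain ⟨pσ, cζ, sζ, mA⟩ := h
  set B := monGL σ 1 one_cube with hBdef
  set C := monGL 1 ζ cζ with hCdef
  have hBmon : IsMon B σ 1 := ⟨pσ, one_cube, by norm_num, rfl⟩
  have hCmon : IsMon C 1 ζ := ⟨pp_one, cζ, sζ, rfl⟩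
  have hB : (QuotientGroup.mk B : PGL6) ∈ Hgroup := mk_mem_Hgroup hBmon
  have hC : (QuotientGroup.mk C : PGL6) ∈ Hgroup := mk_mem_Hgroup hCmon
  have hsplit : A = B * C := by
    apply Units.ext
    rw [Units.val_mul, hBdef, hCdef, monGL_coe, monGL_coe, monMat_mul, mA, one_mul]
    exact (congrArg (monMat σ) (funext fun j => by simp)).symm
  have heq : (⟨QuotientGroup.mk A, hA⟩ : Hgroup) = ⟨QuotientGroup.mk B, hB⟩ *
      ⟨QuotientGroup.mk C, hC⟩ := by
    apply Subtype.ext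
    show (QuotientGroup.mk A : PGL6) = QuotientGroup.mk B * QuotientGroup.mk C
    rw [hsplit, QuotientGroup.mk_mul]
  rw [heq, _root_.map_mul, Units.val_mul, chiCond_perm hχ pσ (monGL_coe _ _ _) hB,
    hχ.2.2 C ζ cζ sζ (by rw [monGL_coe, diagonal_eq_monMat]) hC]

lemma chiCond_chiU : ChiCond chiU := by
  refine ⟨?_, ?_, ?_⟩
  · intro A σ h1 hmat hA
    rw [chiU_spec ⟨Or.inl h1, one_cube, by norm_num, by rw [hmat, permMatrix_eq_monMat]⟩ hA]
    norm_num
  · intro A hmat hA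
    rw [chiU_spec ⟨Or.inr bs_pp2, one_cube, by norm_num,
      by rw [hmat, permMatrix_eq_monMat]⟩ hA, sign_blockSwap]
    norm_num
  · intro A ζ hcube hsum hmat hA
    rw [chiU_spec ⟨pp_one, hcube, hsum, by rw [hmat, diagonal_eq_monMat]⟩ hA,
      Equiv.Perm.sign_one]
    norm_num

lemma chiU_unique {χ' : Hgroup →* ℂˣ} (hχ : ChiCond χ') : χ' = chiU := by
  ext x
  obtain ⟨x, hx⟩ := x
  obtain ⟨A, σ, ζ, hA, rfl⟩ := monform_of_mem hx
  rw [chiCond_value hχ hA hx, ← chiCond_value chiCond_chiU hA hx]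

/-! ### Counting -/

noncomputable def ω : ℂ := Complex.exp (2 * Real.pi * Complex.I / 3)

lemma hω : IsPrimitiveRoot ω 3 := Complex.isPrimitiveRoot_exp 3 (by norm_num)

noncomputable def wpow (a : ZMod 3) : ℂ := ω ^ a.val

lemma wpow_cube (a : ZMod 3) : wpow a ^ 3 = 1 := by
  rw [wpow, ← pow_mul, mul_comm, pow_mul, hω.pow_eq_one, one_pow]

lemma wpow_inj {a b : ZMod 3} (h : wpow a = wpow b) : a = b :=
  ZMod.val_injective 3 (hω.pow_inj (ZMod.val_lt a) (ZMod.val_lt b) h)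

lemma omega_pow_mod (m : ℕ) : ω ^ (m % 3) = ω ^ m := by
  conv_rhs => rw [← Nat.mod_add_div m 3]
  rw [pow_add, pow_mul, hω.pow_eq_one, one_pow, mul_one]

lemma wpow_add (a b : ZMod 3) : wpow (a + b) = wpow a * wpow b := by
  rw [wpow, wpow, wpow, ZMod.val_add, omega_pow_mod, pow_add]

lemma eq_wpow_of_cube {z : ℂ} (hz : z ^ 3 = 1) : ∃ a : ZMod 3, wpow a = z := by
  obtain ⟨i, hi, hpow⟩ := hω.eq_pow_of_pow_eq_one hz
  exact ⟨(i : ZMod 3), by rw [wpow, ZMod.val_natCast, Nat.mod_eq_of_lt hi, hpow]⟩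

lemma scalarGL_coe (c : ℂˣ) :
    ((Units.map (Matrix.scalar (Fin 6) :
        ℂ →+* Matrix (Fin 6) (Fin 6) ℂ).toMonoidHom c : GL (Fin 6) ℂ) :
      Matrix (Fin 6) (Fin 6) ℂ) = (c : ℂ) • (1 : Matrix (Fin 6) (Fin 6) ℂ) := by
  ext i j
  by_cases hij : i = j <;>
    simp [Matrix.scalar_apply, Matrix.one_apply, Matrix.diagonal_apply, hij]

lemma mk_eq_of_rescale {A B : GL (Fin 6) ℂ} {σ : Equiv.Perm (Fin 6)} {ζ η : Fin 6 → ℂ} {c : ℂ}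
    (hA : (A : Matrix (Fin 6) (Fin 6) ℂ) = monMat σ ζ)
    (hB : (B : Matrix (Fin 6) (Fin 6) ℂ) = monMat σ η)
    (hc : c ≠ 0) (hη : ∀ i, η i = c * ζ i) :
    (QuotientGroup.mk A : PGL6) = QuotientGroup.mk B := by
  apply QuotientGroup.eq.mpr
  refine ⟨Units.mk0 c hc, ?_⟩
  have hBA : B = A * (Units.map (Matrix.scalar (Fin 6) :
      ℂ →+* Matrix (Fin 6) (Fin 6) ℂ).toMonoidHom (Units.mk0 c hc)) := by
    apply Units.ext
    rw [Units.val_mul, hA, hB, scalarGL_coe, mul_smul_comm, mul_one, monMat_smul]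
    exact congrArg (monMat σ) (funext hη)
  rw [hBA, inv_mul_cancel_left]

instance : DecidablePred PreservesPartition := fun σ => by
  unfold PreservesPartition; infer_instance

set_option maxHeartbeats 1000000 in
lemma card_pp : Nat.card {σ : Equiv.Perm (Fin 6) // PreservesPartition σ} = 72 := by
  rw [Nat.card_eq_fintype_card]; decide

def condEquiv : {a : Fin 6 → ZMod 3 // a 0 + a 1 + a 2 = a 3 + a 4 + a 5} ≃
    (Fin 5 → ZMod 3) where
  toFun a k := a.1 k.castSucc
  invFun b := ⟨![b 0, b 1, b 2, b 3, b 4, b 0 + b 1 + b 2 - b 3 - b 4], by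
    show b 0 + b 1 + b 2 = b 3 + b 4 + (b 0 + b 1 + b 2 - b 3 - b 4); ring⟩
  left_inv a := by
    apply Subtype.ext
    have h5 : a.1 5 = a.1 0 + a.1 1 + a.1 2 - a.1 3 - a.1 4 := by linear_combination -a.2
    funext i
    fin_cases i <;> first | rfl | exact h5.symm
  right_inv b := by
    funext k
    fin_cases k <;> rfl

lemma card_cond :
    Nat.card {a : Fin 6 → ZMod 3 // a 0 + a 1 + a 2 = a 3 + a 4 + a 5} = 243 := by
  rw [Nat.card_congr condEquiv, Nat.card_eq_fintype_card, Fintype.card_fun]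
  simp

/-- explicit parameters for the elements of `H` -/
def ParamSet : Type :=
  {q : Equiv.Perm (Fin 6) × (Fin 6 → ZMod 3) //
    PreservesPartition q.1 ∧ q.2 0 + q.2 1 + q.2 2 = q.2 3 + q.2 4 + q.2 5}

def paramEquiv : ParamSet ≃ {σ : Equiv.Perm (Fin 6) // PreservesPartition σ} ×
    {a : Fin 6 → ZMod 3 // a 0 + a 1 + a 2 = a 3 + a 4 + a 5} where
  toFun q := (⟨q.1.1, q.2.1⟩, ⟨q.1.2, q.2.2⟩)
  invFun p := ⟨(p.1.1, p.2.1), p.1.2, p.2.2⟩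
  left_inv _ := rfl
  right_inv _ := rfl

lemma card_paramSet : Nat.card ParamSet = 17496 := by
  rw [Nat.card_congr paramEquiv, Nat.card_prod, card_pp, card_cond]

lemma param_cube (a : Fin 6 → ZMod 3) : ∀ i, (fun i => wpow (a i)) i ^ 3 = 1 :=
  fun _ => wpow_cube _

lemma param_isMon {σ : Equiv.Perm (Fin 6)} {a : Fin 6 → ZMod 3}
    (hpp : PreservesPartition σ) (hsum : a 0 + a 1 + a 2 = a 3 + a 4 + a 5) :
    IsMon (monGL σ (fun i => wpow (a i)) (param_cube a)) σ (fun i => wpow (a i)) := by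
  refine ⟨hpp, param_cube a, ?_, rfl⟩
  show wpow (a 0) * wpow (a 1) * wpow (a 2) = wpow (a 3) * wpow (a 4) * wpow (a 5)
  rw [← wpow_add, ← wpow_add, ← wpow_add, ← wpow_add, hsum]

noncomputable def gmap (q : ParamSet) : Hgroup × ZMod 3 :=
  (⟨QuotientGroup.mk (monGL q.1.1 (fun i => wpow (q.1.2 i)) (param_cube q.1.2)),
     mk_mem_Hgroup (param_isMon q.2.1 q.2.2)⟩, q.1.2 0)

lemma gmap_inj : Function.Injective gmap := by
  rintro ⟨⟨σ, a⟩, hpa, hsa⟩ ⟨⟨τ, b⟩, hpb, hsb⟩ h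
  obtain ⟨h1, h2⟩ := Prod.ext_iff.mp h
  have hmk := Subtype.ext_iff.mp h1
  obtain ⟨hστ, c, hc3, hcη⟩ := mon_wd (param_isMon hpa hsa) (param_isMon hpb hsb) hmk
  have h20 : a 0 = b 0 := h2
  have hc1 : c = 1 := by
    have h0 : wpow (b 0) = c * wpow (a 0) := hcη 0
    rw [← h20] at h0
    exact mul_right_cancel₀ (zeta_ne_zero (wpow_cube (a 0)))
      (show c * wpow (a 0) = 1 * wpow (a 0) by rw [one_mul, ← h0])
  have hab : a = b := funext fun i => (wpow_inj (show wpow (b i) = wpow (a i) from by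
    rw [(show wpow (b i) = c * wpow (a i) from hcη i), hc1, one_mul])).symm
  exact Subtype.ext (Prod.ext hστ hab)

lemma gmap_surj : Function.Surjective gmap := by
  rintro ⟨⟨x, hx⟩, t⟩
  obtain ⟨A, σ, ζ, hA, rfl⟩ := monform_of_mem hx
  choose a ha using fun i => eq_wpow_of_cube (hA.2.1 i)
  have hsum : a 0 + a 1 + a 2 = a 3 + a 4 + a 5 := by
    apply wpow_inj
    rw [wpow_add, wpow_add, wpow_add, wpow_add, ha 0, ha 1, ha 2, ha 3, ha 4, ha 5]
    exact hA.2.2.1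
  set d := t - a 0 with hd
  have hsb : (fun i => a i + d) 0 + (fun i => a i + d) 1 + (fun i => a i + d) 2 =
      (fun i => a i + d) 3 + (fun i => a i + d) 4 + (fun i => a i + d) 5 := by
    simp only []
    linear_combination hsum
  refine ⟨⟨(σ, fun i => a i + d), hA.1, hsb⟩, Prod.ext ?_ ?_⟩
  · apply Subtype.ext
    show QuotientGroup.mk (monGL σ _ _) = QuotientGroup.mk A
    refine (mk_eq_of_rescale hA.2.2.2 (monGL_coe _ _ _)
      (zeta_ne_zero (wpow_cube d)) (fun i => ?_)).symm
    show wpow (a i + d) = wpow d * ζ i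
    rw [wpow_add, ha i, mul_comm]
  · show a 0 + d = t
    rw [hd]
    ring

lemma card_Hgroup : Nat.card Hgroup = 5832 := by
  have hb := Nat.card_eq_of_bijective gmap ⟨gmap_inj, gmap_surj⟩
  rw [card_paramSet, Nat.card_prod, Nat.card_zmod] at hb
  omega

/-! ### The range of `χ` -/

lemma chiU_pow_six (x : Hgroup) : (chiU x) ^ 6 = 1 := by
  obtain ⟨x, hx⟩ := x
  obtain ⟨A, σ, ζ, hA, rfl⟩ := monform_of_mem hx
  apply Units.ext
  rw [Units.val_pow_eq_pow_val, Units.val_one]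
  show ((chiU ⟨QuotientGroup.mk A, hx⟩ : ℂˣ) : ℂ) ^ 6 = 1
  rw [chiU_spec hA hx, mul_pow]
  have hs : (((Equiv.Perm.sign σ : ℤ) : ℂ)) ^ 6 = 1 := by
    rcases Int.units_eq_one_or (Equiv.Perm.sign σ) with h | h <;> rw [h] <;> norm_num
  have h3 : (ζ 0 * ζ 1 * ζ 2) ^ 3 = 1 := by
    rw [mul_pow, mul_pow, hA.2.1 0, hA.2.1 1, hA.2.1 2]
    ring
  have hp : (ζ 0 * ζ 1 * ζ 2) ^ 6 = 1 := by
    have e : (ζ 0 * ζ 1 * ζ 2) ^ 6 = ((ζ 0 * ζ 1 * ζ 2) ^ 3) ^ 2 := by ring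
    rw [e, h3, one_pow]
  rw [hs, hp, one_mul]

lemma exists_neg_one : ∃ y : Hgroup, (chiU y : ℂ) = -1 := by
  have hmon : IsMon (monGL (Equiv.swap 0 1) 1 one_cube) (Equiv.swap 0 1) 1 :=
    ⟨Or.inl (by decide), one_cube, by norm_num, rfl⟩
  refine ⟨⟨_, mk_mem_Hgroup hmon⟩, ?_⟩
  rw [chiU_spec hmon (mk_mem_Hgroup hmon), Equiv.Perm.sign_swap (by decide)]
  norm_num

noncomputable def zom : Fin 6 → ℂ := fun i => if i = 0 ∨ i = 3 then ω else 1

lemma zom_cube : ∀ i, zom i ^ 3 = 1 := by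
  intro i
  fin_cases i <;> simp [zom, hω.pow_eq_one]

lemma exists_omega : ∃ y : Hgroup, (chiU y : ℂ) = ω := by
  have hmon : IsMon (monGL 1 zom zom_cube) 1 zom :=
    ⟨pp_one, zom_cube, by simp [zom], rfl⟩
  refine ⟨⟨_, mk_mem_Hgroup hmon⟩, ?_⟩
  rw [chiU_spec hmon (mk_mem_Hgroup hmon), Equiv.Perm.sign_one]
  simp [zom]

lemma card_range : Nat.card chiU.range = 6 := by
  have hle : chiU.range ≤ rootsOfUnity 6 ℂ := by
    rintro y ⟨x, rfl⟩
    rw [mem_rootsOfUnity]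
    exact chiU_pow_six x
  have hdvd1 : Nat.card chiU.range ∣ 6 := by
    have h := Subgroup.card_dvd_of_le hle
    have h6 : Nat.card (rootsOfUnity 6 ℂ) = 6 := by
      rw [Complex.card_rootsOfUnity 6]
    rwa [h6] at h
  obtain ⟨y1, hy1⟩ := exists_neg_one
  obtain ⟨y2, hy2⟩ := exists_omega
  set v : ℂˣ := chiU y1 * chiU y2 with hvdef
  have hv : (v : ℂ) = -ω := by rw [hvdef, Units.val_mul, hy1, hy2]; ring
  have hvord : orderOf v = 6 := by
    apply orderOf_eq_of_pow_and_pow_div_prime (by norm_num)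
    · apply Units.ext
      rw [Units.val_pow_eq_pow_val, hv, Units.val_one,
        show ((-ω) ^ 6 : ℂ) = (ω ^ 3) ^ 2 from by ring, hω.pow_eq_one]
      norm_num
    · intro p hp hpd
      have h2le := hp.two_le
      have hle6 : p ≤ 6 := Nat.le_of_dvd (by norm_num) hpd
      interval_cases p
      · -- p = 2 : v ^ 3 ≠ 1
        intro hc
        have hcv := congrArg (Units.val) hc
        rw [Units.val_pow_eq_pow_val, hv, Units.val_one,
          show (6 / 2 : ℕ) = 3 from rfl,
          show ((-ω) ^ (3 : ℕ) : ℂ) = -(ω ^ 3) from by ring, hω.pow_eq_one] at hcv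
        norm_num at hcv
      · -- p = 3 : v ^ 2 ≠ 1
        intro hc
        have hcv := congrArg (Units.val) hc
        rw [Units.val_pow_eq_pow_val, hv, Units.val_one,
          show (6 / 3 : ℕ) = 2 from rfl,
          show ((-ω) ^ (2 : ℕ) : ℂ) = ω ^ 2 from by ring] at hcv
        exact hω.pow_ne_one_of_pos_of_lt (by norm_num) (by norm_num) hcv
      · exact absurd hpd (by norm_num)
      · exact absurd hpd (by norm_num)
      · exact absurd hp (by norm_num)
  have hmem : v ∈ chiU.range := mul_mem ⟨y1, rfl⟩ ⟨y2, rfl⟩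
  have hdvd2 : 6 ∣ Nat.card chiU.range := by
    have h := orderOf_dvd_natCard (⟨v, hmem⟩ : chiU.range)
    rwa [Subgroup.orderOf_mk, hvord] at h
  exact Nat.dvd_antisymm hdvd1 hdvd2

end Aux

/-- There is a (unique) group homomorphism `χ : H → ℂˣ` taking the
prescribed values on the generators of `H`; its kernel is a subgroup of index `6` in
`H`, of order `972`. -/
theorem exists_character_of_H :
    ∃ χ : Hgroup →* ℂˣ, ChiCond χ ∧ (∀ χ' : Hgroup →* ℂˣ, ChiCond χ' → χ' = χ) ∧
      χ.ker.index = 6 ∧ Nat.card χ.ker = 972 := by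
  have hidx : chiU.ker.index = 6 := by
    rw [Subgroup.index_ker, card_range]
  refine ⟨chiU, chiCond_chiU, fun χ' h => chiU_unique h, hidx, ?_⟩
  have h1 := Subgroup.card_mul_index chiU.ker
  rw [hidx, card_Hgroup] at h1
  omega
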